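/- For an object M of an Abelian category, the following four conditions are equivalent: (P1 left) for every m ≥ 0 and every subobject N' ⊆ M^m there are k, l ≥ 0 and morphisms α : M^k → M^m, β : M^k → M^l such that N' is the image of the restriction of α to ker(β); (P2 left) every subobject of a power of M lies in the smallest class C of subobjects of powers of M such that (a) 0 ⊆ M^m and M^m ⊆ M^m lie in C for all m, (b) if N' ⊆ M^m lies in C and φ : M^m → M^k is a morphism then φ(N') ⊆ M^k lies in C, (c) if N' ⊆ M^k lies in C and φ : M^m → M^k is a morphism then φ^{-1}(N') ⊆ M^m lies in C; (P1 right) for every quotient M^m ↠ N there are k, l ≥ 0 and morphisms α : M^m → M^k, β : M^l → M^k such that N is the coimage of the composite M^m → M^k → coker(β); (P2 right) every quotient of a power of M lies in the smallest class C' of quotients of powers of M such that (a) M^m ↠ 0 and M^m ↠ M^m lie in C' for all m, (b) if M^k ↠ N lies in C' and φ : M^m → M^k is a morphism then the quotient M^m ↠ φ^{-1}(N) obtained from the epi-mono factorization of M^m → M^k → N lies in C', (c) if M^m ↠ N lies in C' and φ : M^m → M^k is a morphism then M^k ↠ φ(N), defined as the pushout of M^m ↠ N along φ, lies in C'. -/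

import Mathlib

set_option maxHeartbeats 1000000
set_option synthInstance.maxHeartbeats 400000

open CategoryTheory CategoryTheory.Limits ZeroObject

universe v u

attribute [local instance] CategoryTheory.Abelian.hasFiniteBiproducts

variable {A : Type u} [Category.{v} A] [Abelian A]

/-- The `m`-th power `M^m` of an object (`M^0 = 0`). -/
noncomputable abbrev pow (M : A) (m : ℕ) : A := ⨁ (fun _ : Fin m => M)

/-- (P1 left): for every subobject `N' ⊆ M^m` there are `k, l ≥ 0` and morphisms
`α : M^k ⟶ M^m`, `β : M^k ⟶ M^l` such that `N'` is the image of the restriction of `α`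
to `ker(β)`. -/
def P1Left (M : A) : Prop :=
  ∀ (m : ℕ) (N' : Subobject (pow M m)),
    ∃ (k l : ℕ) (α : pow M k ⟶ pow M m) (β : pow M k ⟶ pow M l),
      imageSubobject (kernel.ι β ≫ α) = N'

/-- The smallest class `C` of subobjects of powers of `M` containing `0 ⊆ M^m` and
`M^m ⊆ M^m`, and closed under images and preimages along morphisms between powers
of `M`. -/
inductive LeftClass (M : A) : ∀ m : ℕ, Subobject (pow M m) → Prop
  | bot (m : ℕ) : LeftClass M m ⊥
  | top (m : ℕ) : LeftClass M m ⊤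
  | img {m k : ℕ} (φ : pow M m ⟶ pow M k) {N : Subobject (pow M m)} :
      LeftClass M m N → LeftClass M k (imageSubobject (N.arrow ≫ φ))
  | preimg {m k : ℕ} (φ : pow M m ⟶ pow M k) {N : Subobject (pow M k)} :
      LeftClass M k N → LeftClass M m ((Subobject.pullback φ).obj N)

/-- (P2 left): every subobject of a power of `M` lies in the class `LeftClass M`. -/
def P2Left (M : A) : Prop :=
  ∀ (m : ℕ) (N' : Subobject (pow M m)), LeftClass M m N'

/-- (P1 right): for every quotient `q : M^m ↠ N` there are `k, l ≥ 0` and morphisms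
`α : M^m ⟶ M^k`, `β : M^l ⟶ M^k` such that `N` is the coimage of
`α' = α ≫ coker(β)`; in an Abelian category this says exactly that `q` and `α'` have the
same kernel subobject. -/
def P1Right (M : A) : Prop :=
  ∀ (m : ℕ) (N : A) (q : pow M m ⟶ N), Epi q →
    ∃ (k l : ℕ) (α : pow M m ⟶ pow M k) (β : pow M l ⟶ pow M k),
      kernelSubobject (α ≫ cokernel.π β) = kernelSubobject q

/-- The smallest class `C'` of quotients of powers of `M` (closed under isomorphism of
quotients) containing `M^m ↠ 0` and `M^m ↠ M^m`, and closed under the two operations: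
for a quotient `q : M^k ↠ N` and `φ : M^m ⟶ M^k` the quotient `M^m ↠ φ⁻¹(N)` obtained
from the epi-mono factorization of `φ ≫ q`, and for a quotient `q : M^m ↠ N` and
`φ : M^m ⟶ M^k` the quotient `M^k ↠ φ(N)` obtained as the pushout of `q` along `φ`. -/
inductive RightClass (M : A) : ∀ m : ℕ, ∀ N : A, (pow M m ⟶ N) → Prop
  | zero (m : ℕ) : RightClass M m 0 0
  | id (m : ℕ) : RightClass M m (pow M m) (𝟙 (pow M m))
  | preimg {k : ℕ} {N : A} {q : pow M k ⟶ N} (hq : RightClass M k N q)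
      {m : ℕ} (φ : pow M m ⟶ pow M k) :
      RightClass M m (image (φ ≫ q)) (factorThruImage (φ ≫ q))
  | push {m : ℕ} {N : A} {q : pow M m ⟶ N} (hq : RightClass M m N q)
      {k : ℕ} (φ : pow M m ⟶ pow M k) :
      RightClass M k (pushout q φ) (pushout.inr q φ)
  | iso {m : ℕ} {N N' : A} {q : pow M m ⟶ N} (hq : RightClass M m N q) (e : N ≅ N') :
      RightClass M m N' (q ≫ e.hom)

/-- (P2 right): every quotient of a power of `M` lies in the class `RightClass M`. -/
def P2Right (M : A) : Prop :=
  ∀ (m : ℕ) (N : A) (q : pow M m ⟶ N), Epi q → RightClass M m N q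

theorem pb_obj_mk {X Y Z : A} (f : X ⟶ Y) (g : Z ⟶ Y) [Mono g] :
    (Subobject.pullback f).obj (Subobject.mk g) = Subobject.mk (pullback.snd g f) := rfl

theorem pb_obj_eq {X Y : A} (f : X ⟶ Y) (P : Subobject Y) :
    (Subobject.pullback f).obj P = Subobject.mk (pullback.snd P.arrow f) := by
  conv_lhs => rw [← Subobject.mk_arrow P]
  exact pb_obj_mk f P.arrow

/-- H2 -/
theorem le_pullback_obj {X Y : A} (f : X ⟶ Y) {P : Subobject Y} {N : Subobject X}
    (h : P.Factors (N.arrow ≫ f)) : N ≤ (Subobject.pullback f).obj P := by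
  rw [pb_obj_eq]
  exact Subobject.le_mk_of_comm
    (pullback.lift (P.factorThru _ h) N.arrow (by simp)) (pullback.lift_snd _ _ _)

/-- H4: descend a factorisation along an epi. -/
theorem factors_of_epi_comp {W V Y : A} (e : W ⟶ V) [Epi e] (g : V ⟶ Y) {P : Subobject Y}
    (h : P.Factors (e ≫ g)) : P.Factors g := by
  haveI := strongEpi_of_epi e
  have sq : CommSq (P.factorThru _ h) e P.arrow g := ⟨by simp⟩
  exact (Subobject.factors_iff _ _).mpr ⟨sq.lift, sq.fac_right⟩

/-- Lemma E -/
theorem imageSubobject_epi_comp {X' X Y : A} (h : X' ⟶ X) [Epi h] (f : X ⟶ Y) :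
    imageSubobject (h ≫ f) = imageSubobject f := by
  refine le_antisymm (imageSubobject_comp_le h f) (imageSubobject_le f ?_ ?_)
  · exact Subobject.factorThru _ _ (factors_of_epi_comp h f
      ((Subobject.factors_iff _ _).mpr ⟨factorThruImageSubobject _, by simp⟩))
  · simp

/-- H5 -/
theorem mk_le_of_epi_factor {R Q X : A} (g : Q ⟶ X) [Mono g] (h : R ⟶ Q) [Epi h]
    {T : Subobject X} (u : R ⟶ (T : A)) (w : u ≫ T.arrow = h ≫ g) :
    Subobject.mk g ≤ T := by
  rw [← imageSubobject_mono g, ← imageSubobject_epi_comp h g]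
  exact imageSubobject_le _ u w

/-- Lemma L -/
theorem kernelSubobject_comp {X Y Z : A} (f : X ⟶ Y) (g : Y ⟶ Z) :
    kernelSubobject (f ≫ g) = (Subobject.pullback f).obj (kernelSubobject g) := by
  refine le_antisymm (le_pullback_obj f (kernelSubobject_factors _ _ (by simp))) ?_
  rw [pb_obj_eq]
  refine Subobject.mk_le_of_comm (factorThruKernelSubobject (f ≫ g)
    (pullback.snd _ f) ?_) (factorThruKernelSubobject_comp_arrow _ _ _)
  rw [← Category.assoc, ← pullback.condition, Category.assoc, kernelSubobject_arrow_comp,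
    comp_zero]

/-- Lemma Q -/
theorem kernelSubobject_cokernel_π {X Y : A} (f : X ⟶ Y) :
    kernelSubobject (cokernel.π f) = imageSubobject f := by
  refine Subobject.mk_eq_mk_of_comm _ _ (Abelian.imageIsoImage f) ?_
  exact Abelian.imageIsoImage_hom_comp_image_ι f

/-- Lemma K2: `inl⁻¹(im(α,β)) = α(ker β)`. -/
theorem pullback_inl_image_lift {P X L : A} (α : P ⟶ X) (β : P ⟶ L) :
    (Subobject.pullback (biprod.inl : X ⟶ X ⊞ L)).obj (imageSubobject (biprod.lift α β)) =
      imageSubobject (kernel.ι β ≫ α) := by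
  refine le_antisymm ?_ ?_
  · rw [pb_obj_eq]
    set θ := biprod.lift α β with hθ
    have key : (pullback.fst (factorThruImageSubobject θ)
          (pullback.fst (imageSubobject θ).arrow (biprod.inl : X ⟶ X ⊞ L))) ≫ θ =
        pullback.snd _ _ ≫ pullback.snd (imageSubobject θ).arrow (biprod.inl : X ⟶ X ⊞ L)
          ≫ biprod.inl := by
      calc pullback.fst _ _ ≫ θ
          = (pullback.fst _ _ ≫ factorThruImageSubobject θ) ≫ (imageSubobject θ).arrow := by
            rw [Category.assoc, imageSubobject_arrow_comp]
        _ = (pullback.snd _ _ ≫ pullback.fst _ _) ≫ (imageSubobject θ).arrow := by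
            rw [pullback.condition]
        _ = pullback.snd _ _ ≫ pullback.fst _ _ ≫ (imageSubobject θ).arrow := by
            rw [Category.assoc]
        _ = _ := by rw [pullback.condition]
    have hβ : (pullback.fst (factorThruImageSubobject θ)
        (pullback.fst (imageSubobject θ).arrow (biprod.inl : X ⟶ X ⊞ L))) ≫ β = 0 := by
      have := key =≫ biprod.snd
      simpa [hθ] using this
    have hα : (kernel.lift β _ hβ) ≫ (kernel.ι β ≫ α) =
        pullback.snd _ _ ≫ pullback.snd (imageSubobject θ).arrow (biprod.inl : X ⟶ X ⊞ L) := by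
      have := key =≫ biprod.fst
      rw [Category.assoc, Category.assoc, Category.assoc] at this
      simp only [hθ, biprod.lift_fst, biprod.inl_fst, Category.comp_id] at this
      rw [← Category.assoc, kernel.lift_ι, this]
    exact mk_le_of_epi_factor (pullback.snd _ _) (pullback.snd _ _)
      (kernel.lift β _ hβ ≫ factorThruImageSubobject (kernel.ι β ≫ α))
      (by rw [Category.assoc, imageSubobject_arrow_comp]; exact hα)
  · refine le_pullback_obj _ ?_
    refine factors_of_epi_comp (factorThruImageSubobject (kernel.ι β ≫ α)) _ ?_
    rw [← Category.assoc, imageSubobject_arrow_comp]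
    have : kernel.ι β ≫ α ≫ (biprod.inl : X ⟶ X ⊞ L) = kernel.ι β ≫ biprod.lift α β := by
      apply biprod.hom_ext <;> simp
    rw [Category.assoc, this]
    exact imageSubobject_factors_comp_self _ _

/-- Lemma K1: `φ⁻¹(im ψ) = pr₁(ker(φ - ψ))`. -/
theorem image_kernel_desc {X Y C0 : A} (φ : X ⟶ C0) (ψ : Y ⟶ C0) :
    imageSubobject (kernel.ι (biprod.desc φ (-ψ)) ≫ biprod.fst) =
      (Subobject.pullback φ).obj (imageSubobject ψ) := by
  set μ := biprod.desc φ (-ψ) with hμdef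
  refine le_antisymm ?_ ?_
  · refine le_pullback_obj _ ?_
    refine factors_of_epi_comp (factorThruImageSubobject (kernel.ι μ ≫ biprod.fst)) _ ?_
    rw [← Category.assoc, imageSubobject_arrow_comp]
    have hμ : μ = biprod.fst ≫ φ - biprod.snd ≫ ψ := by
      apply biprod.hom_ext' <;> simp [hμdef]
    have h0 : kernel.ι μ ≫ (biprod.fst ≫ φ - biprod.snd ≫ ψ) = 0 := by
      rw [← hμ]; exact kernel.condition μ
    rw [Preadditive.comp_sub, sub_eq_zero] at h0
    rw [Category.assoc, h0, ← Category.assoc]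
    exact imageSubobject_factors_comp_self _ _
  · rw [pb_obj_eq]
    have key : (pullback.fst (factorThruImageSubobject ψ)
          (pullback.fst (imageSubobject ψ).arrow φ)) ≫ ψ =
        pullback.snd _ _ ≫ pullback.snd (imageSubobject ψ).arrow φ ≫ φ := by
      calc pullback.fst _ _ ≫ ψ
          = (pullback.fst _ _ ≫ factorThruImageSubobject ψ) ≫ (imageSubobject ψ).arrow := by
            rw [Category.assoc, imageSubobject_arrow_comp]
        _ = (pullback.snd _ _ ≫ pullback.fst _ _) ≫ (imageSubobject ψ).arrow := by
            rw [pullback.condition]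
        _ = pullback.snd _ _ ≫ pullback.fst _ _ ≫ (imageSubobject ψ).arrow := by
            rw [Category.assoc]
        _ = _ := by rw [pullback.condition]
    have hw : (biprod.lift (pullback.snd _ _ ≫ pullback.snd (imageSubobject ψ).arrow φ)
        (pullback.fst (factorThruImageSubobject ψ) (pullback.fst (imageSubobject ψ).arrow φ)))
        ≫ μ = 0 := by
      simp [hμdef, key]
    have hv : kernel.lift μ _ hw ≫ (kernel.ι μ ≫ biprod.fst) =
        pullback.snd _ _ ≫ pullback.snd (imageSubobject ψ).arrow φ := by
      rw [← Category.assoc, kernel.lift_ι, biprod.lift_fst]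
    exact mk_le_of_epi_factor (pullback.snd _ _) (pullback.snd _ _)
      (kernel.lift μ _ hw ≫ factorThruImageSubobject (kernel.ι μ ≫ biprod.fst))
      (by rw [Category.assoc, imageSubobject_arrow_comp]; exact hv)

/-- H6 -/
theorem pullback_iso_image_comp {W Y Z : A} (g : W ⟶ Y) (i : Y ≅ Z) :
    (Subobject.pullback i.hom).obj (imageSubobject (g ≫ i.hom)) = imageSubobject g := by
  refine le_antisymm ?_ ?_
  · rw [pb_obj_eq]
    refine Subobject.mk_le_of_comm
      (pullback.fst _ _ ≫ (imageSubobjectCompIso g i.hom).hom) ?_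
    rw [Category.assoc, imageSubobjectCompIso_hom_arrow, pullback.condition_assoc]
    simp
  · refine le_pullback_obj _ ?_
    refine factors_of_epi_comp (factorThruImageSubobject g) _ ?_
    rw [← Category.assoc, imageSubobject_arrow_comp]
    have := imageSubobject_factors_comp_self (g ≫ i.hom) (𝟙 W)
    simpa using this

/-- H7 -/
theorem imageSubobject_kernel_iso_comp {W X Y Z : A} (j : W ≅ X) (μ : X ⟶ Y) (g : X ⟶ Z) :
    imageSubobject (kernel.ι (j.hom ≫ μ) ≫ (j.hom ≫ g)) = imageSubobject (kernel.ι μ ≫ g) := by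
  have h : kernel.ι (j.hom ≫ μ) ≫ j.hom ≫ g =
      ((kernelIsIsoComp j.hom μ).hom ≫ kernel.ι μ) ≫ g := by
    rw [← Category.assoc]
    congr 1
    simp [kernelIsIsoComp]
  rw [h, Category.assoc, imageSubobject_iso_comp]

/-- preimage of zero subobject is the kernel -/
theorem pullback_bot {X Y : A} (f : X ⟶ Y) :
    (Subobject.pullback f).obj ⊥ = kernelSubobject f := by
  refine le_antisymm ?_ ?_
  · rw [pb_obj_eq]
    refine Subobject.mk_le_of_comm (factorThruKernelSubobject f (pullback.snd _ _) ?_)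
      (factorThruKernelSubobject_comp_arrow _ _ _)
    rw [← pullback.condition]
    simp [Subobject.bot_arrow]
  · refine le_pullback_obj _ ?_
    rw [kernelSubobject_arrow_comp]
    exact Subobject.factors_zero

theorem imageSubobject_id {X : A} : imageSubobject (𝟙 X) = ⊤ := by
  rw [imageSubobject_mono, ← Subobject.top_eq_id]

theorem kernelSubobject_mono {X Y : A} (f : X ⟶ Y) [Mono f] : kernelSubobject f = ⊥ :=
  Subobject.mk_eq_bot_iff_zero.mpr (kernel.ι_of_mono f)

/-- pushout of an epi `q` along `φ` is the cokernel of `ker q → Y`. -/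
noncomputable def pushoutIsoCokernel {X Y N : A} (q : X ⟶ N) [Epi q] (φ : X ⟶ Y) :
    pushout q φ ≅ cokernel (kernel.ι q ≫ φ) where
  hom := pushout.desc (Abelian.epiDesc q (φ ≫ cokernel.π (kernel.ι q ≫ φ))
      (by rw [← Category.assoc]; exact cokernel.condition _))
    (cokernel.π _) (by rw [Abelian.comp_epiDesc])
  inv := cokernel.desc _ (pushout.inr q φ)
    (by rw [Category.assoc, ← pushout.condition, ← Category.assoc, kernel.condition,
      zero_comp])
  hom_inv_id := by
    apply pushout.hom_ext
    · rw [pushout.inl_desc_assoc, Category.comp_id]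
      apply (cancel_epi q).mp
      rw [← Category.assoc, Abelian.comp_epiDesc, Category.assoc, cokernel.π_desc,
        pushout.condition]
    · rw [pushout.inr_desc_assoc, cokernel.π_desc, Category.comp_id]
  inv_hom_id := by
    apply coequalizer.hom_ext
    rw [cokernel.π_desc_assoc, pushout.inr_desc, Category.comp_id]

theorem inr_pushoutIsoCokernel {X Y N : A} (q : X ⟶ N) [Epi q] (φ : X ⟶ Y) :
    pushout.inr q φ ≫ (pushoutIsoCokernel q φ).hom = cokernel.π (kernel.ι q ≫ φ) := by
  simp [pushoutIsoCokernel, pushout.inr_desc]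

/-- Lemma P -/
theorem kernelSubobject_pushout_inr {X Y N : A} (q : X ⟶ N) [Epi q] (φ : X ⟶ Y) :
    kernelSubobject (pushout.inr q φ) = imageSubobject (kernel.ι q ≫ φ) := by
  rw [← kernelSubobject_cokernel_π, ← inr_pushoutIsoCokernel q φ,
    kernelSubobject_comp_mono]

/-- two epis with the same kernel have isomorphic targets -/
theorem exists_iso_of_kernelSubobject_eq {X N₁ N₂ : A} (q₁ : X ⟶ N₁) (q₂ : X ⟶ N₂)
    [Epi q₁] [Epi q₂] (h : kernelSubobject q₁ = kernelSubobject q₂) :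
    ∃ e : N₁ ≅ N₂, q₁ ≫ e.hom = q₂ := by
  have h1 : kernel.ι q₁ ≫ q₂ = 0 := by
    have w : (kernelSubobject q₁).arrow ≫ q₂ = 0 := by
      rw [h]; exact kernelSubobject_arrow_comp q₂
    rw [← kernelSubobject_arrow', Category.assoc, w, comp_zero]
  have h2 : kernel.ι q₂ ≫ q₁ = 0 := by
    have w : (kernelSubobject q₂).arrow ≫ q₁ = 0 := by
      rw [← h]; exact kernelSubobject_arrow_comp q₁
    rw [← kernelSubobject_arrow', Category.assoc, w, comp_zero]
  refine ⟨⟨Abelian.epiDesc q₁ q₂ h1, Abelian.epiDesc q₂ q₁ h2, ?_, ?_⟩, Abelian.comp_epiDesc _ _ _⟩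
  · apply (cancel_epi q₁).mp
    rw [← Category.assoc, Abelian.comp_epiDesc, Abelian.comp_epiDesc, Category.comp_id]
  · apply (cancel_epi q₂).mp
    rw [← Category.assoc, Abelian.comp_epiDesc, Abelian.comp_epiDesc, Category.comp_id]

noncomputable def powAdd (M : A) (k l : ℕ) : pow M k ⊞ pow M l ≅ pow M (k + l) where
  hom := biproduct.lift (fun j : Fin (k + l) =>
    Fin.addCases (fun i => biprod.fst ≫ biproduct.π _ i) (fun i => biprod.snd ≫ biproduct.π _ i) j)
  inv := biprod.lift (biproduct.lift fun i => biproduct.π _ (Fin.castAdd l i))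
    (biproduct.lift fun i => biproduct.π _ (Fin.natAdd k i))
  hom_inv_id := by
    apply biprod.hom_ext <;> ext j i <;>
      simp [Fin.addCases, biprod.lift_fst, biprod.lift_snd]
  inv_hom_id := by
    ext j
    induction j using Fin.addCases with
    | left i => simp
    | right i => simp

theorem imageSubobject_congr {X Y : A} {f g : X ⟶ Y} (h : f = g) :
    imageSubobject f = imageSubobject g := by rw [h]

theorem kernelSubobject_congr {X Y : A} {f g : X ⟶ Y} (h : f = g) :
    kernelSubobject f = kernelSubobject g := by rw [h]

variable (M : A)

def GoodA {X : A} (N : Subobject X) : Prop :=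
  ∃ (k l : ℕ) (α : pow M k ⟶ X) (β : pow M k ⟶ pow M l),
    imageSubobject (kernel.ι β ≫ α) = N

def GoodB {X : A} (N : Subobject X) : Prop :=
  ∃ (k l : ℕ) (φ : X ⟶ pow M k) (ψ : pow M l ⟶ pow M k),
    (Subobject.pullback φ).obj (imageSubobject ψ) = N

theorem GoodB.pullback {X Y : A} {N : Subobject X} (f : Y ⟶ X) (h : GoodB M N) :
    GoodB M ((Subobject.pullback f).obj N) := by
  obtain ⟨k, l, φ, ψ, rfl⟩ := h
  exact ⟨k, l, f ≫ φ, ψ, Subobject.pullback_comp f φ _⟩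

theorem GoodA.image {X Y : A} {N : Subobject X} (f : X ⟶ Y) (h : GoodA M N) :
    GoodA M (imageSubobject (N.arrow ≫ f)) := by
  obtain ⟨k, l, α, β, rfl⟩ := h
  refine ⟨k, l, α ≫ f, β, ?_⟩
  have hc : kernel.ι β ≫ α ≫ f = factorThruImageSubobject (kernel.ι β ≫ α) ≫
      ((imageSubobject (kernel.ι β ≫ α)).arrow ≫ f) := by
    rw [← Category.assoc, ← Category.assoc, imageSubobject_arrow_comp]
  exact (imageSubobject_congr hc).trans (imageSubobject_epi_comp _ _)

theorem goodA_to_B (m : ℕ) (N : Subobject (pow M m)) (h : GoodA M N) : GoodB M N := by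
  obtain ⟨k, l, α, β, rfl⟩ := h
  refine ⟨m + l, k, biprod.inl ≫ (powAdd M m l).hom, biprod.lift α β ≫ (powAdd M m l).hom, ?_⟩
  rw [Subobject.pullback_comp, pullback_iso_image_comp, pullback_inl_image_lift]

theorem goodB_to_A (m : ℕ) (N : Subobject (pow M m)) (h : GoodB M N) : GoodA M N := by
  obtain ⟨c, l, φ, ψ, rfl⟩ := h
  refine ⟨m + l, c, (powAdd M m l).symm.hom ≫ biprod.fst,
    (powAdd M m l).symm.hom ≫ biprod.desc φ (-ψ), ?_⟩
  exact (imageSubobject_kernel_iso_comp (powAdd M m l).symm (biprod.desc φ (-ψ))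
    biprod.fst).trans (image_kernel_desc φ ψ)

theorem goodB_image (m k : ℕ) (N : Subobject (pow M m)) (φ : pow M m ⟶ pow M k)
    (h : GoodB M N) : GoodB M (imageSubobject (N.arrow ≫ φ)) :=
  goodA_to_B M k _ (GoodA.image M φ (goodB_to_A M m N h))

/-- GoodB form as a kernel form -/
theorem goodB_iff_kernel_form (m : ℕ) (N : Subobject (pow M m)) :
    GoodB M N ↔ ∃ (k l : ℕ) (α : pow M m ⟶ pow M k) (β : pow M l ⟶ pow M k),
      kernelSubobject (α ≫ cokernel.π β) = N := by
  constructor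
  · rintro ⟨k, l, φ, ψ, rfl⟩
    exact ⟨k, l, φ, ψ, by rw [kernelSubobject_comp, kernelSubobject_cokernel_π]⟩
  · rintro ⟨k, l, α, β, rfl⟩
    exact ⟨k, l, α, β, by rw [kernelSubobject_comp, kernelSubobject_cokernel_π]⟩



theorem leftClass_goodA {m : ℕ} {N : Subobject (pow M m)} (h : LeftClass M m N) : GoodA M N := by
  induction h with
  | bot m =>
    exact ⟨m, m, 0, 0, (imageSubobject_congr (comp_zero)).trans imageSubobject_zero⟩
  | top m =>
    refine ⟨m, m, 𝟙 _, 0, (imageSubobject_congr (Category.comp_id _)).trans ?_⟩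
    rw [imageSubobject_mono, Subobject.mk_eq_top_of_isIso]
  | img φ hN ih => exact GoodA.image M φ ih
  | preimg φ hN ih => exact goodB_to_A M _ _ (GoodB.pullback M φ (goodA_to_B M _ _ ih))

theorem goodA_leftClass {m : ℕ} {N : Subobject (pow M m)} (h : GoodA M N) : LeftClass M m N := by
  obtain ⟨k, l, α, β, rfl⟩ := h
  have h2 : LeftClass M k (kernelSubobject β) := by
    have h1 := LeftClass.preimg β (LeftClass.bot (M := M) l)
    rwa [pullback_bot] at h1
  have h3 := LeftClass.img α h2
  have hc : kernel.ι β ≫ α = (kernelSubobjectIso β).inv ≫ ((kernelSubobject β).arrow ≫ α) := by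
    rw [← Category.assoc, kernelSubobject_arrow']
  rw [imageSubobject_congr hc, imageSubobject_iso_comp]
  exact h3

theorem rightClass_epi {m : ℕ} {N : A} {q : pow M m ⟶ N} (h : RightClass M m N q) : Epi q := by
  induction h with
  | zero m => exact ⟨fun g h _ => (isZero_zero A).eq_of_src g h⟩
  | id m => infer_instance
  | preimg hq φ ih => infer_instance
  | push hq φ ih => haveI := ih; infer_instance
  | iso hq e ih => haveI := ih; exact epi_comp _ _

theorem rightClass_goodB {m : ℕ} {N : A} {q : pow M m ⟶ N} (h : RightClass M m N q) :
    GoodB M (kernelSubobject q) := by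
  induction h with
  | zero m =>
    rw [kernelSubobject_zero]
    exact ⟨m, m, 𝟙 _, 𝟙 _, by rw [imageSubobject_id, Subobject.pullback_top]⟩
  | id m => exact ⟨m, 0, 𝟙 _, 0, by rw [imageSubobject_zero, pullback_bot]⟩
  | preimg hq φ ih =>
    rename_i kk NN qq mm
    have hc : kernelSubobject (factorThruImage (φ ≫ qq)) =
        (Subobject.pullback φ).obj (kernelSubobject qq) :=
      calc kernelSubobject (factorThruImage (φ ≫ qq))
          = kernelSubobject (factorThruImage (φ ≫ qq) ≫ image.ι (φ ≫ qq)) :=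
            (kernelSubobject_comp_mono _ _).symm
        _ = kernelSubobject (φ ≫ qq) := kernelSubobject_congr (image.fac _)
        _ = (Subobject.pullback φ).obj (kernelSubobject qq) := kernelSubobject_comp φ qq
    rw [hc]
    exact GoodB.pullback M φ ih
  | push hq φ ih =>
    rename_i mm NN qq kk
    haveI := rightClass_epi M hq
    have hc : kernelSubobject (pushout.inr qq φ) =
        imageSubobject ((kernelSubobject qq).arrow ≫ φ) := by
      rw [kernelSubobject_pushout_inr qq φ]
      refine (imageSubobject_congr (show kernel.ι qq ≫ φ =
        (kernelSubobjectIso qq).inv ≫ ((kernelSubobject qq).arrow ≫ φ) from ?_)).trans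
        (imageSubobject_iso_comp _ _)
      rw [← Category.assoc, kernelSubobject_arrow']
    rw [hc]
    exact goodB_image M _ _ _ φ ih
  | iso hq e ih => rw [kernelSubobject_comp_mono]; exact ih

theorem p1Right_iff_goodB : P1Right M ↔ ∀ (m : ℕ) (N' : Subobject (pow M m)), GoodB M N' := by
  constructor
  · intro h m N'
    obtain ⟨k, l, α, β, hk⟩ := h m _ (cokernel.π N'.arrow) inferInstance
    rw [goodB_iff_kernel_form]
    refine ⟨k, l, α, β, ?_⟩
    rw [hk, kernelSubobject_cokernel_π, imageSubobject_mono, Subobject.mk_arrow]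
  · intro h m N q hq
    exact (goodB_iff_kernel_form M m (kernelSubobject q)).mp (h m _)

noncomputable def pushoutZeroIsoCokernel {L K : A} (β : L ⟶ K) :
    pushout (0 : L ⟶ (0 : A)) β ≅ cokernel β where
  hom := pushout.desc 0 (cokernel.π β) (by simp)
  inv := cokernel.desc β (pushout.inr _ _) (by rw [← pushout.condition, zero_comp])
  hom_inv_id := by
    apply pushout.hom_ext
    · exact (isZero_zero A).eq_of_src _ _
    · simp [pushout.inr_desc_assoc]
  inv_hom_id := by
    apply coequalizer.hom_ext
    simp [pushout.inr_desc]

theorem inr_pushoutZeroIsoCokernel {L K : A} (β : L ⟶ K) :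
    pushout.inr (0 : L ⟶ (0 : A)) β ≫ (pushoutZeroIsoCokernel β).hom = cokernel.π β := by
  simp [pushoutZeroIsoCokernel, pushout.inr_desc]

theorem p1Right_to_p2Right (h : P1Right M) : P2Right M := by
  intro m N q hq
  obtain ⟨k, l, α, β, hk⟩ := h m N q hq
  have h1 := RightClass.push (RightClass.zero (M := M) l) β
  have h2 := RightClass.iso h1 (pushoutZeroIsoCokernel β)
  rw [inr_pushoutZeroIsoCokernel] at h2
  have h3 := RightClass.preimg h2 α
  haveI : Epi q := hq
  have hker : kernelSubobject (factorThruImage (α ≫ cokernel.π β)) = kernelSubobject q :=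
    calc kernelSubobject (factorThruImage (α ≫ cokernel.π β))
        = kernelSubobject (factorThruImage (α ≫ cokernel.π β) ≫ image.ι _) :=
          (kernelSubobject_comp_mono _ _).symm
      _ = kernelSubobject (α ≫ cokernel.π β) := kernelSubobject_congr (image.fac _)
      _ = kernelSubobject q := hk
  obtain ⟨e, he⟩ := exists_iso_of_kernelSubobject_eq _ q hker
  have h4 := RightClass.iso h3 e
  rw [he] at h4
  exact h4

theorem p2Right_to_p1Right (h : P2Right M) : P1Right M := by
  intro m N q hq
  exact (goodB_iff_kernel_form M m (kernelSubobject q)).mp (rightClass_goodB M (h m N q hq))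

/-- **(Definition `DEFWP`.)** For an object `M` of an Abelian category the four
conditions (P1 left), (P2 left), (P1 right) and (P2 right) are equivalent. -/
theorem principality_conditions_equivalent (M : A) :
    (P1Left M ↔ P2Left M) ∧ (P2Left M ↔ P1Right M) ∧ (P1Right M ↔ P2Right M) := by
  refine ⟨⟨fun h m N' => goodA_leftClass M (h m N'), fun h m N' => leftClass_goodA M (h m N')⟩,
    ⟨fun h => (p1Right_iff_goodB M).mpr
        (fun m N' => goodA_to_B M m N' (leftClass_goodA M (h m N'))),
      fun h m N' => goodA_leftClass M (goodB_to_A M m N' ((p1Right_iff_goodB M).mp h m N'))⟩,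
    ⟨p1Right_to_p2Right M, p2Right_to_p1Right M⟩⟩
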